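/- Let A be a *-algebra over ℂ and suppose b₁, …, bₙ ∈ A satisfy relations star(bᵢ) * bᵢ = λ_{i1}·b₁ + … + λ_{in}·bₙ for all 1 ≤ i ≤ n, where λ_{ij} ∈ ℂ. Then for every complex inner product space V and every pre-*-representation π of A on V, each operator π(bᵢ) is bounded: there exists C ≥ 0 with ‖π(bᵢ)ξ‖ ≤ C‖ξ‖ for all ξ ∈ V. -/

import Mathlib

/-- If elements `b₁, …, bₙ` of a complex *-algebra satisfy
`star bᵢ * bᵢ = ∑ⱼ λᵢⱼ • bⱼ`, then in every pre-*-representation `π` on a complex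
inner product space each operator `π (bᵢ)` is bounded. -/
theorem stmt_1 {A : Type*} [Ring A] [Algebra ℂ A] [StarRing A] [StarModule ℂ A]
    (n : ℕ) (b : Fin n → A) (lam : Fin n → Fin n → ℂ)
    (hrel : ∀ i, star (b i) * b i = ∑ j, lam i j • b j)
    {V : Type*} [NormedAddCommGroup V] [InnerProductSpace ℂ V]
    (π : A →ₗ[ℂ] (V →ₗ[ℂ] V))
    (hmul : ∀ x y : A, π (x * y) = π x ∘ₗ π y)
    (hadj : ∀ (x : A) (ξ η : V), (inner ℂ (π x ξ) η : ℂ) = inner ℂ ξ (π (star x) η)) :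
    ∀ i, ∃ C : ℝ, 0 ≤ C ∧ ∀ ξ : V, ‖π (b i) ξ‖ ≤ C * ‖ξ‖ := by
  intro i
  set C : ℝ := ∑ k, ∑ j, ‖lam k j‖ with hC
  have hC0 : 0 ≤ C := Finset.sum_nonneg fun _ _ => Finset.sum_nonneg fun _ _ => norm_nonneg _
  refine ⟨C, hC0, fun ξ => ?_⟩
  -- key identity: ‖π (b k) ξ‖^2 ≤ (∑ j, ‖lam k j‖ * ‖π (b j) ξ‖) * ‖ξ‖
  have key : ∀ k : Fin n, ‖π (b k) ξ‖ ^ 2 ≤ (∑ j, ‖lam k j‖ * ‖π (b j) ξ‖) * ‖ξ‖ := by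
    intro k
    have h1 : (inner ℂ (π (b k) ξ) (π (b k) ξ) : ℂ)
        = ∑ j, lam k j * inner ℂ ξ (π (b j) ξ) := by
      rw [hadj, ← LinearMap.comp_apply, ← hmul, hrel k]
      simp [inner_sum, inner_smul_right, map_sum]
    have h2 : ‖π (b k) ξ‖ ^ 2 = ‖(inner ℂ (π (b k) ξ) (π (b k) ξ) : ℂ)‖ := by
      rw [inner_self_eq_norm_sq_to_K]
      simp [norm_pow]
    rw [h2, h1]
    calc ‖∑ j, lam k j * inner ℂ ξ (π (b j) ξ)‖
        ≤ ∑ j, ‖lam k j * (inner ℂ ξ (π (b j) ξ) : ℂ)‖ := norm_sum_le _ _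
      _ ≤ ∑ j, ‖lam k j‖ * (‖ξ‖ * ‖π (b j) ξ‖) := by
          refine Finset.sum_le_sum fun j _ => ?_
          rw [norm_mul]
          exact mul_le_mul_of_nonneg_left (norm_inner_le_norm _ _) (norm_nonneg _)
      _ = (∑ j, ‖lam k j‖ * ‖π (b j) ξ‖) * ‖ξ‖ := by
          rw [Finset.sum_mul]; congr 1; ext j; ring
  -- pick a maximizer
  obtain ⟨j₀, -, hj₀⟩ := Finset.exists_max_image Finset.univ (fun j => ‖π (b j) ξ‖)
    ⟨i, Finset.mem_univ i⟩
  have hmax : ∀ j, ‖π (b j) ξ‖ ≤ ‖π (b j₀) ξ‖ := fun j => hj₀ j (Finset.mem_univ j)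
  have hj0 : ‖π (b j₀) ξ‖ ≤ C * ‖ξ‖ := by
    rcases eq_or_lt_of_le (norm_nonneg (π (b j₀) ξ)) with h | h
    · rw [← h]; positivity
    · have := key j₀
      have hb : (∑ j, ‖lam j₀ j‖ * ‖π (b j) ξ‖) * ‖ξ‖
          ≤ (C * ‖π (b j₀) ξ‖) * ‖ξ‖ := by
        apply mul_le_mul_of_nonneg_right _ (norm_nonneg ξ)
        calc ∑ j, ‖lam j₀ j‖ * ‖π (b j) ξ‖
            ≤ ∑ j, ‖lam j₀ j‖ * ‖π (b j₀) ξ‖ := by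
              refine Finset.sum_le_sum fun j _ => ?_
              exact mul_le_mul_of_nonneg_left (hmax j) (norm_nonneg _)
          _ = (∑ j, ‖lam j₀ j‖) * ‖π (b j₀) ξ‖ := by rw [Finset.sum_mul]
          _ ≤ C * ‖π (b j₀) ξ‖ := by
              apply mul_le_mul_of_nonneg_right _ (norm_nonneg _)
              exact Finset.single_le_sum (f := fun k => ∑ j, ‖lam k j‖)
                (fun _ _ => Finset.sum_nonneg fun _ _ => norm_nonneg _) (Finset.mem_univ j₀)
      have h3 : ‖π (b j₀) ξ‖ ^ 2 ≤ C * ‖π (b j₀) ξ‖ * ‖ξ‖ := le_trans this hb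
      nlinarith
  exact le_trans (hmax i) hj0
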